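/- arXiv:1109.4862 — 3 statements merged into one kernel-verified Lean document; each statement's English description precedes it below -/
import Mathlib

section
/- (In ZFC.) Let η be an ordinal with η < ω₂, and let (M_α)_{α<η} be subsets of [0,1] with M_α ⊆ M_β whenever α ≤ β < η. Then there exists a family (A_α)_{α<η} of G_δ subsets of [0,1] such that A_α is a hull of M_α for every α < η (i.e. M_α ⊆ A_α and λ*(A_α) = λ*(M_α)) and A_α ⊆ A_β whenever α ≤ β < η. -/
open MeasureTheory Set

noncomputable section

open ENNReal Cardinal

universe u

namespace MonotoneHullAux

/-- `D` is almost contained in every measurable superset of `X`. -/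
def AESub (D X : Set ℝ) : Prop :=
  ∀ B : Set ℝ, MeasurableSet B → X ⊆ B → volume (D \ B) = 0

lemma aesub_of_subset {D X : Set ℝ} (h : D ⊆ X) : AESub D X := by
  intro B _ hXB
  have h2 : D \ B = ∅ := by
    rw [diff_eq_empty]
    exact h.trans hXB
  simp [h2]

lemma AESub.mono_right {D X Y : Set ℝ} (h : AESub D X) (hXY : X ⊆ Y) : AESub D Y :=
  fun B hB hYB => h B hB (hXY.trans hYB)

lemma AESub.mono_left {D D' X : Set ℝ} (h : AESub D X) (hD : D' ⊆ D) : AESub D' X :=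
  fun B hB hXB => measure_mono_null (diff_subset_diff_left hD) (h B hB hXB)

lemma AESub.union {D₁ D₂ X : Set ℝ} (h1 : AESub D₁ X) (h2 : AESub D₂ X) :
    AESub (D₁ ∪ D₂) X := fun B hB hXB => by
  rw [union_diff_distrib]
  exact measure_union_null (h1 B hB hXB) (h2 B hB hXB)

lemma aesub_of_null {D X : Set ℝ} (h : volume D = 0) : AESub D X :=
  fun _ _ _ => measure_mono_null diff_subset h

lemma AESub.iUnion_lt {i : Ordinal.{u}} (hcnt : (Set.Iio i).Countable)
    {F : Ordinal → Set ℝ} {X : Set ℝ} (h : ∀ j < i, AESub (F j) X) :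
    AESub (⋃ j, ⋃ (_ : j < i), F j) X := by
  intro B hB hXB
  have hsub : (⋃ j, ⋃ (_ : j < i), F j) \ B ⊆ ⋃ j ∈ Iio i, (F j \ B) := by
    rintro x ⟨hx, hxB⟩
    simp only [mem_iUnion, mem_Iio, mem_diff] at hx ⊢
    obtain ⟨j, hj, hxj⟩ := hx
    exact ⟨j, hj, hxj, hxB⟩
  exact measure_mono_null hsub
    ((measure_biUnion_null_iff hcnt).2 fun j hj => h j hj B hB hXB)

lemma exists_gdelta_hull (X : Set ℝ) (hX : volume X ≠ ⊤) :
    ∃ H : Set ℝ, IsGδ H ∧ X ⊆ H ∧ volume H = volume X := by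
  have h : ∀ n : ℕ, ∃ U : Set ℝ, X ⊆ U ∧ IsOpen U ∧
      volume U < volume X + (n : ℝ≥0∞)⁻¹ := by
    intro n
    apply Set.exists_isOpen_lt_of_lt
    exact ENNReal.lt_add_right hX (by simp)
  choose U hXU hUopen hUvol using h
  refine ⟨⋂ n, U n, IsGδ.iInter_of_isOpen hUopen, subset_iInter hXU,
    le_antisymm ?_ (measure_mono (subset_iInter hXU))⟩
  refine ENNReal.le_of_forall_pos_le_add fun ε hε _ => ?_
  obtain ⟨n, hn⟩ := ENNReal.exists_inv_nat_lt (a := (ε : ℝ≥0∞)) (by exact_mod_cast hε.ne')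
  calc volume (⋂ n, U n) ≤ volume (U n) := measure_mono (iInter_subset _ n)
    _ ≤ volume X + (n : ℝ≥0∞)⁻¹ := (hUvol n).le
    _ ≤ volume X + ε := add_le_add le_rfl hn.le

/-- A choice of Gδ hull. -/
def gHull (X : Set ℝ) : Set ℝ :=
  Classical.epsilon fun H => IsGδ H ∧ X ⊆ H ∧ volume H = volume X

lemma gHull_spec (X : Set ℝ) (hX : volume X ≠ ⊤) :
    IsGδ (gHull X) ∧ X ⊆ gHull X ∧ volume (gHull X) = volume X :=
  Classical.epsilon_spec (exists_gdelta_hull X hX)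

lemma diff_null {H B X : Set ℝ} (hH : MeasurableSet H) (hB : MeasurableSet B)
    (hfin : volume H ≠ ⊤) (hXH : X ⊆ H) (hXB : X ⊆ B)
    (hvol : volume H = volume X) : volume (H \ B) = 0 := by
  have h1 : volume H ≤ volume (H ∩ B) := by
    rw [hvol]; exact measure_mono (subset_inter hXH hXB)
  have hb_ne : volume (H ∩ B) ≠ ⊤ := ne_top_of_le_ne_top hfin (measure_mono inter_subset_left)
  have h2 : volume (H \ B) + volume (H ∩ B) = volume H := measure_diff_add_inter H hB
  have h3 : volume (H \ B) = volume H - volume (H ∩ B) :=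
    ENNReal.eq_sub_of_add_eq hb_ne h2
  rw [h3]
  exact tsub_eq_zero_of_le h1

lemma aesub_gHull {X : Set ℝ} (hX : volume X ≠ ⊤) : AESub (gHull X) X := by
  obtain ⟨hGδ, hsub, hvol⟩ := gHull_spec X hX
  intro B hB hXB
  exact diff_null hGδ.measurableSet hB (by rw [hvol]; exact hX) hsub hXB hvol

lemma countable_Iio_of_lt {i : Ordinal.{u}} (h : i < (Cardinal.aleph 1).ord) :
    (Set.Iio i).Countable := by
  have h1 := Cardinal.lt_ord.1 h
  have h2 : Cardinal.aleph 1 = Order.succ Cardinal.aleph0 := by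
    have h3 : (1 : Ordinal) = Order.succ 0 := by
      rw [← Ordinal.add_one_eq_succ, zero_add]
    rw [h3, Cardinal.aleph_succ, Cardinal.aleph_zero]
  rw [h2, Order.lt_succ_iff] at h1
  rw [← Set.countable_coe_iff]
  refine Cardinal.mk_le_aleph0_iff.1 ?_
  calc #(Set.Iio i) = Cardinal.lift.{u+1} i.card := Ordinal.mk_Iio_ordinal i
    _ ≤ Cardinal.lift.{u+1} Cardinal.aleph0 := Cardinal.lift_le.2 h1
    _ = Cardinal.aleph0 := Cardinal.lift_aleph0

/-- Start of the `i`-th segment determined by the cofinal map `g`. -/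
def sOf (g : Ordinal.{u} → Ordinal.{u}) (i : Ordinal.{u}) : Ordinal.{u} :=
  Ordinal.blsub i fun j _ => g j

/-- Length of the `i`-th segment. -/
def lenOf (g : Ordinal.{u} → Ordinal.{u}) (i : Ordinal.{u}) : Ordinal.{u} :=
  (g i + 1) - sOf g i

/-- Validity predicate for segment data: `p.1` is the envelope of segment `i`,
`p.2` the family of hulls on the segment, `Dp` the accumulated lower bound. -/
def SegOK (M : Ordinal.{u} → Set ℝ) (E : Set ℝ) (g : Ordinal.{u} → Ordinal.{u})
    (i : Ordinal.{u}) (Dp : Set ℝ) (p : Set ℝ × (Ordinal.{u} → Set ℝ)) : Prop :=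
  IsGδ p.1 ∧ p.1 ⊆ E ∧ Dp ⊆ p.1 ∧ AESub p.1 (M (g i)) ∧
  (∀ δ, δ < lenOf g i → IsGδ (p.2 δ) ∧ M (sOf g i + δ) ∪ Dp ⊆ p.2 δ ∧ p.2 δ ⊆ p.1 ∧
    volume (p.2 δ) = volume (M (sOf g i + δ))) ∧
  (∀ δ δ', δ ≤ δ' → δ' < lenOf g i → p.2 δ ⊆ p.2 δ')

/-- Transfinite-recursive choice of segment data. -/
def segF (M : Ordinal.{u} → Set ℝ) (D E : Set ℝ) (g : Ordinal.{u} → Ordinal.{u}) :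
    Ordinal.{u} → Set ℝ × (Ordinal.{u} → Set ℝ) :=
  Ordinal.lt_wf.fix fun i rec =>
    Classical.epsilon (SegOK M E g i (D ∪ ⋃ j, ⋃ (h : j < i), (rec j h).1))

lemma segF_eq (M : Ordinal.{u} → Set ℝ) (D E : Set ℝ) (g : Ordinal.{u} → Ordinal.{u})
    (i : Ordinal.{u}) :
    segF M D E g i =
      Classical.epsilon (SegOK M E g i (D ∪ ⋃ j, ⋃ (_ : j < i), (segF M D E g j).1)) :=
  WellFounded.fix_eq _ _ _

theorem key (η : Ordinal.{u}) : η < (Cardinal.aleph 2).ord →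
    ∀ (M : Ordinal.{u} → Set ℝ) (D E : Set ℝ),
    (∀ α β : Ordinal, α ≤ β → β < η → M α ⊆ M β) →
    (∀ α < η, M α ⊆ E) → D ⊆ E → IsGδ E → volume E ≠ ⊤ →
    (∀ α < η, AESub D (M α)) →
    ∃ A : Ordinal.{u} → Set ℝ,
      (∀ α < η, IsGδ (A α) ∧ M α ∪ D ⊆ A α ∧ A α ⊆ E ∧ volume (A α) = volume (M α)) ∧
      (∀ α β : Ordinal, α ≤ β → β < η → A α ⊆ A β) := by
  induction η using Ordinal.induction with
  | h η IH =>
  intro hη M D E hmono hME hDE hE hEvol hcompat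
  rcases Ordinal.zero_or_succ_or_isSuccLimit η with rfl | ⟨β, rfl⟩ | hlim
  · exact ⟨fun _ => ∅, fun α hα => absurd hα (not_lt_of_ge (zero_le (a := α))),
      fun α β _ hβ => absurd hβ (not_lt_of_ge (zero_le (a := β)))⟩
  · -- successor case
    have hβη : β < Order.succ β := Order.lt_succ β
    have hβ2 : β < (Cardinal.aleph 2).ord := hβη.trans hη
    have hMβE : M β ⊆ E := hME β hβη
    have hMβfin : volume (M β) ≠ ⊤ := ne_top_of_le_ne_top hEvol (measure_mono hMβE)
    obtain ⟨hH0g, hH0s, hH0v⟩ := gHull_spec (M β) hMβfin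
    have hDnull : volume (D \ gHull (M β)) = 0 := hcompat β hβη _ hH0g.measurableSet hH0s
    obtain ⟨hN0g, hN0s, hN0v⟩ := gHull_spec (D \ gHull (M β))
      (by rw [hDnull]; exact ENNReal.zero_ne_top)
    have hN0null : volume (gHull (D \ gHull (M β))) = 0 := by rw [hN0v, hDnull]
    set E' := (gHull (M β) ∪ gHull (D \ gHull (M β))) ∩ E with hE'def
    have hE'g : IsGδ E' := (hH0g.union hN0g).inter hE
    have hE'E : E' ⊆ E := inter_subset_right
    have hMβE' : M β ⊆ E' := subset_inter (hH0s.trans subset_union_left) hMβE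
    have hDE' : D ⊆ E' := by
      refine subset_inter ?_ hDE
      intro x hx
      by_cases hxH : x ∈ gHull (M β)
      · exact Or.inl hxH
      · exact Or.inr (hN0s ⟨hx, hxH⟩)
    have hE'v : volume E' = volume (M β) := by
      refine le_antisymm ?_ (measure_mono hMβE')
      calc volume E' ≤ volume (gHull (M β) ∪ gHull (D \ gHull (M β))) :=
            measure_mono inter_subset_left
        _ ≤ volume (gHull (M β)) + volume (gHull (D \ gHull (M β))) := measure_union_le _ _
        _ = volume (M β) := by rw [hH0v, hN0null, add_zero]
    obtain ⟨A, hA1, hA2⟩ := IH β hβη hβ2 M D E'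
      (fun α α' h h' => hmono α α' h (h'.trans hβη))
      (fun α hα => (hmono α β hα.le hβη).trans hMβE')
      hDE' hE'g (by rw [hE'v]; exact hMβfin)
      (fun α hα => hcompat α (hα.trans hβη))
    refine ⟨fun α => if α < β then A α else E', ?_, ?_⟩
    · intro α hα
      rcases lt_or_eq_of_le (Order.lt_succ_iff.1 hα) with h | h
      · simp only [if_pos h]
        obtain ⟨h1, h2, h3, h4⟩ := hA1 α h
        exact ⟨h1, h2, h3.trans hE'E, h4⟩
      · subst h
        simp only [if_neg (lt_irrefl α)]
        exact ⟨hE'g, union_subset hMβE' hDE', hE'E, hE'v⟩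
    · intro α α' hle hlt
      rcases lt_or_eq_of_le (Order.lt_succ_iff.1 hlt) with h | h
      · have hαβ : α < β := lt_of_le_of_lt hle h
        simp only [if_pos hαβ, if_pos h]
        exact hA2 α α' hle h
      · subst h
        simp only [if_neg (lt_irrefl α')]
        by_cases hαβ : α < α'
        · simp only [if_pos hαβ]
          exact (hA1 α hαβ).2.2.1
        · simp only [if_neg hαβ]
          exact Subset.rfl
  · -- limit case
    have hcof : η.cof.ord ≤ (Cardinal.aleph 1).ord := by
      refine Cardinal.ord_le_ord.2 ?_
      have hcard : η.card < Cardinal.aleph 2 := Cardinal.lt_ord.1 hη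
      have h2 : Cardinal.aleph 2 = Order.succ (Cardinal.aleph 1) := by
        have h3 : (2 : Ordinal) = Order.succ 1 := by
          rw [← Ordinal.add_one_eq_succ, one_add_one_eq_two]
        rw [h3, Cardinal.aleph_succ]
      rw [h2, Order.lt_succ_iff] at hcard
      exact (Ordinal.cof_le_card η).trans hcard
    obtain ⟨ι, hιle, g, hg_lt, hg_mono, hg_cof⟩ :
        ∃ ι : Ordinal, ι ≤ (Cardinal.aleph 1).ord ∧ ∃ g : Ordinal → Ordinal,
          (∀ i, i < ι → g i < η) ∧ (∀ i j, i < j → j < ι → g i < g j) ∧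
          (∀ α, α < η → ∃ i, i < ι ∧ α ≤ g i) := by
      obtain ⟨f, hf⟩ := Ordinal.exists_fundamental_sequence η
      refine ⟨η.cof.ord, hcof, fun i => if h : i < η.cof.ord then f i h else 0, ?_, ?_, ?_⟩
      · intro i hi
        simp only [dif_pos hi]; rw [← hf.blsub_eq]
        exact Ordinal.lt_blsub f i hi
      · intro i j hij hj
        simp only [dif_pos (hij.trans hj), dif_pos hj]
        exact hf.strict_mono _ _ hij
      · intro α hα
        conv at hα => rw [← hf.blsub_eq]
        obtain ⟨i, hi, hle⟩ := Ordinal.lt_blsub_iff.1 hα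
        exact ⟨i, hi, by simp only [dif_pos hi]; exact hle⟩
    have hslen : ∀ i, i < ι → sOf g i + lenOf g i = g i + 1 := by
      intro i hi
      refine Ordinal.add_sub_cancel_of_le ?_
      refine Ordinal.blsub_le fun j hj => ?_
      have hgi1 : g i < g i + 1 := by
        rw [Ordinal.add_one_eq_succ]; exact Order.lt_succ _
      exact (hg_mono j i hj hi).trans hgi1
    have hsucc_lt : ∀ i, i < ι → g i + 1 < η := by
      intro i hi
      rw [Ordinal.add_one_eq_succ]
      exact hlim.succ_lt (hg_lt i hi)
    have hlen_lt : ∀ i, i < ι → lenOf g i < η := by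
      intro i hi
      exact lt_of_le_of_lt (Ordinal.sub_le.2 (le_add_self)) (hsucc_lt i hi)
    have hseg_idx_le : ∀ i, i < ι → ∀ δ, δ < lenOf g i → sOf g i + δ ≤ g i := by
      intro i hi δ hδ
      have h1 : sOf g i + δ < g i + 1 := by
        rw [← hslen i hi]
        exact (add_lt_add_iff_left _).2 hδ
      rw [Ordinal.add_one_eq_succ, Order.lt_succ_iff] at h1
      exact h1
    have main : ∀ i, i < ι →
        SegOK M E g i (D ∪ ⋃ j, ⋃ (_ : j < i), (segF M D E g j).1) (segF M D E g i) := by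
      intro i
      induction i using Ordinal.induction with
      | h i IH2 =>
      intro hi
      have hgiη : g i < η := hg_lt i hi
      have hMgiE : M (g i) ⊆ E := hME _ hgiη
      have hMgifin : volume (M (g i)) ≠ ⊤ := ne_top_of_le_ne_top hEvol (measure_mono hMgiE)
      obtain ⟨hHig, hHis, hHiv⟩ := gHull_spec (M (g i)) hMgifin
      have hcnt : (Set.Iio i).Countable := countable_Iio_of_lt (lt_of_lt_of_le hi hιle)
      have hDpAE : AESub (D ∪ ⋃ j, ⋃ (_ : j < i), (segF M D E g j).1) (M (g i)) := by
        refine (hcompat _ hgiη).union (AESub.iUnion_lt hcnt ?_)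
        intro j hj
        exact (IH2 j hj (hj.trans hi)).2.2.2.1.mono_right
          (hmono _ _ (hg_mono j i hj hi).le hgiη)
      have hDpnull :
          volume ((D ∪ ⋃ j, ⋃ (_ : j < i), (segF M D E g j).1) \ gHull (M (g i))) = 0 :=
        hDpAE _ hHig.measurableSet hHis
      obtain ⟨hNig, hNis, hNiv⟩ :=
        gHull_spec ((D ∪ ⋃ j, ⋃ (_ : j < i), (segF M D E g j).1) \ gHull (M (g i)))
          (by rw [hDpnull]; exact ENNReal.zero_ne_top)
      set Ni := gHull ((D ∪ ⋃ j, ⋃ (_ : j < i), (segF M D E g j).1) \ gHull (M (g i)))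
        with hNidef
      have hNinull : volume Ni = 0 := by rw [hNiv, hDpnull]
      set Ei := (gHull (M (g i)) ∪ Ni) ∩ E with hEidef
      have hEig : IsGδ Ei := (hHig.union hNig).inter hE
      have hEiE : Ei ⊆ E := inter_subset_right
      have hDpE : (D ∪ ⋃ j, ⋃ (_ : j < i), (segF M D E g j).1) ⊆ E := by
        refine union_subset hDE (iUnion_subset fun j => iUnion_subset fun hj => ?_)
        exact (IH2 j hj (hj.trans hi)).2.1
      have hDpEi : (D ∪ ⋃ j, ⋃ (_ : j < i), (segF M D E g j).1) ⊆ Ei := by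
        refine subset_inter ?_ hDpE
        intro x hx
        by_cases hxH : x ∈ gHull (M (g i))
        · exact Or.inl hxH
        · exact Or.inr (hNis ⟨hx, hxH⟩)
      have hEiAE : AESub Ei (M (g i)) := by
        refine AESub.mono_left ?_ inter_subset_left
        exact (aesub_gHull hMgifin).union (aesub_of_null hNinull)
      have hMseg : ∀ δ, δ < lenOf g i → M (sOf g i + δ) ⊆ M (g i) :=
        fun δ hδ => hmono _ _ (hseg_idx_le i hi δ hδ) hgiη
      have hsegη : ∀ δ, δ < lenOf g i → sOf g i + δ < η :=
        fun δ hδ => lt_of_le_of_lt (hseg_idx_le i hi δ hδ) hgiη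
      obtain ⟨A', hA'1, hA'2⟩ := IH (lenOf g i) (hlen_lt i hi) ((hlen_lt i hi).trans hη)
        (fun δ => M (sOf g i + δ)) (D ∪ ⋃ j, ⋃ (_ : j < i), (segF M D E g j).1) Ei
        (fun δ δ' h h' => hmono _ _ ((add_le_add_iff_left _).2 h) (hsegη δ' h'))
        (fun δ hδ => subset_inter (((hMseg δ hδ).trans hHis).trans subset_union_left)
          (hME _ (hsegη δ hδ)))
        hDpEi hEig (ne_top_of_le_ne_top hEvol (measure_mono hEiE))
        (fun δ hδ => by
          refine (hcompat _ (hsegη δ hδ)).union (AESub.iUnion_lt hcnt ?_)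
          intro j hj
          refine (IH2 j hj (hj.trans hi)).2.2.2.1.mono_right (hmono _ _ ?_ (hsegη δ hδ))
          exact le_trans (Ordinal.lt_blsub (fun j _ => g j) j hj).le le_self_add)
      rw [segF_eq]
      exact Classical.epsilon_spec
        (p := SegOK M E g i (D ∪ ⋃ j, ⋃ (_ : j < i), (segF M D E g j).1))
        ⟨(Ei, A'), hEig, hEiE, hDpEi, hEiAE, hA'1, hA'2⟩
    -- glue the segments together
    set idx : Ordinal.{u} → Ordinal.{u} := fun α => sInf {i | i < ι ∧ α ≤ g i} with hidxdef
    have hidx_mem : ∀ α, α < η → idx α < ι ∧ α ≤ g (idx α) := by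
      intro α hα
      obtain ⟨i, hi, hle⟩ := hg_cof α hα
      exact csInf_mem (⟨i, hi, hle⟩ : {i | i < ι ∧ α ≤ g i}.Nonempty)
    have hidx_min : ∀ α, α < η → ∀ j, j < idx α → g j < α := by
      intro α hα j hj
      have hnotin : j ∉ {i | i < ι ∧ α ≤ g i} :=
        notMem_of_lt_csInf hj (OrderBot.bddBelow _)
      have hjι : j < ι := hj.trans (hidx_mem α hα).1
      by_contra hcon
      exact hnotin ⟨hjι, not_lt.1 hcon⟩
    have hsOf_le : ∀ α, α < η → sOf g (idx α) ≤ α :=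
      fun α hα => Ordinal.blsub_le fun j hj => hidx_min α hα j hj
    have hdelta : ∀ α, α < η → sOf g (idx α) + (α - sOf g (idx α)) = α :=
      fun α hα => Ordinal.add_sub_cancel_of_le (hsOf_le α hα)
    have hdelta_lt : ∀ α, α < η → α - sOf g (idx α) < lenOf g (idx α) := by
      intro α hα
      have h1 : sOf g (idx α) + (α - sOf g (idx α)) < sOf g (idx α) + lenOf g (idx α) := by
        rw [hdelta α hα, hslen (idx α) (hidx_mem α hα).1, Ordinal.add_one_eq_succ]
        exact Order.lt_succ_iff.2 (hidx_mem α hα).2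
      exact (add_lt_add_iff_left _).1 h1
    refine ⟨fun α => (segF M D E g (idx α)).2 (α - sOf g (idx α)), ?_, ?_⟩
    · intro α hα
      obtain ⟨hiι, hile⟩ := hidx_mem α hα
      have hSOK := main (idx α) hiι
      obtain ⟨h1, h2, h3, h4⟩ := hSOK.2.2.2.2.1 (α - sOf g (idx α)) (hdelta_lt α hα)
      rw [hdelta α hα] at h2 h4
      have hMa : M α ⊆ (segF M D E g (idx α)).2 (α - sOf g (idx α)) :=
        subset_union_left.trans h2
      have hDa : D ⊆ (segF M D E g (idx α)).2 (α - sOf g (idx α)) :=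
        (subset_union_left.trans subset_union_right).trans h2
      exact ⟨h1, union_subset hMa hDa, h3.trans hSOK.2.1, h4⟩
    · intro α α' hle hlt'
      have hα : α < η := lt_of_le_of_lt hle hlt'
      obtain ⟨hi, hgle⟩ := hidx_mem α hα
      obtain ⟨hi', hgle'⟩ := hidx_mem α' hlt'
      have hij : idx α ≤ idx α' := by
        refine csInf_le_csInf (OrderBot.bddBelow _) ⟨idx α', hi', hgle'⟩ ?_
        intro j hj
        exact ⟨hj.1, hle.trans hj.2⟩
      rcases eq_or_lt_of_le hij with heq | hltidx
      · have hSOK := main (idx α') hi'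
        have hδle : α - sOf g (idx α') ≤ α' - sOf g (idx α') := by
          refine Ordinal.sub_le.2 ?_
          rw [hdelta α' hlt']
          exact hle
        show (segF M D E g (idx α)).2 (α - sOf g (idx α)) ⊆
          (segF M D E g (idx α')).2 (α' - sOf g (idx α'))
        rw [heq]
        exact hSOK.2.2.2.2.2 _ _ hδle (hdelta_lt α' hlt')
      · have hSOKα := main (idx α) hi
        have hSOKα' := main (idx α') hi'
        obtain ⟨h1', h2', h3', h4'⟩ := hSOKα'.2.2.2.2.1 (α' - sOf g (idx α'))
          (hdelta_lt α' hlt')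
        have hstep1 : (segF M D E g (idx α)).2 (α - sOf g (idx α)) ⊆ (segF M D E g (idx α)).1 :=
          (hSOKα.2.2.2.2.1 _ (hdelta_lt α hα)).2.2.1
        have hstep2 : (segF M D E g (idx α)).1 ⊆
            D ∪ ⋃ j, ⋃ (_ : j < idx α'), (segF M D E g j).1 := by
          refine subset_union_of_subset_right ?_ D
          exact subset_iUnion₂ (s := fun j (_ : j < idx α') => (segF M D E g j).1)
            (idx α) hltidx
        have hstep3 : (D ∪ ⋃ j, ⋃ (_ : j < idx α'), (segF M D E g j).1) ⊆
            (segF M D E g (idx α')).2 (α' - sOf g (idx α')) :=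
          subset_union_right.trans h2'
        exact hstep1.trans (hstep2.trans hstep3)

end MonotoneHullAux

open MonotoneHullAux in
/-- (ZFC) Every increasing chain of subsets of `[0,1]` of order type `η < ω₂` admits an
increasing family of Gδ hulls. Here `volume` applied to an arbitrary set is the Lebesgue
outer measure, and `ω₂` is the initial ordinal of `ℵ₂`. -/
theorem monotone_Gdelta_hull_on_wellordered_chain_below_omega_two
    (η : Ordinal) (hη : η < (Cardinal.aleph 2).ord) (M : Ordinal → Set ℝ)
    (hM : ∀ α < η, M α ⊆ Icc (0:ℝ) 1)
    (hmono : ∀ α β : Ordinal, α ≤ β → β < η → M α ⊆ M β) :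
    ∃ A : Ordinal → Set ℝ,
      (∀ α < η, IsGδ (A α) ∧ A α ⊆ Icc (0:ℝ) 1 ∧ M α ⊆ A α ∧
        volume (A α) = volume (M α)) ∧
      (∀ α β : Ordinal, α ≤ β → β < η → A α ⊆ A β) := by
  obtain ⟨A, h1, h2⟩ := key η hη M ∅ (Icc (0:ℝ) 1) hmono hM (empty_subset _)
    isClosed_Icc.isGδ (by rw [Real.volume_Icc]; exact ENNReal.ofReal_ne_top)
    (fun α _ => aesub_of_subset (empty_subset _))
  refine ⟨A, fun α hα => ?_, h2⟩
  obtain ⟨ha, hb, hc, hd⟩ := h1 α hα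
  exact ⟨ha, hc, subset_union_left.trans hb, hd⟩
end
end

section
/- There is no strictly monotone Borel hull operation on N: there exists no map φ : N → P([0,1]) such that φ(A) is a Borel set containing A with λ*(φ(A)) = λ*(A) for every Lebesgue null A ⊆ [0,1], and A ⊊ A' implies φ(A) ⊊ φ(A'). -/
open MeasureTheory Set

noncomputable section

/-- The class of Lebesgue null subsets of `[0,1]`. -/
def NullSets : Set (Set ℝ) := {A | A ⊆ Icc (0:ℝ) 1 ∧ volume A = 0}

section Aux
open Cardinal


-- Borel sets of ℝ have cardinality at most continuum
theorem borel_card : #{t : Set ℝ | MeasurableSet t} ≤ 𝔠 := by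
  have h : (Real.measurableSpace) = MeasurableSpace.generateFrom (range (Iio : ℝ → Set ℝ)) :=
    borel_eq_generateFrom_Iio ℝ
  have := MeasurableSpace.cardinal_measurableSet_le_continuum
    (s := range (Iio : ℝ → Set ℝ)) (mk_range_le.trans (by rw [mk_real]))
  convert this using 3
  rw [h]



def cdig (a : ℕ → Bool) (n : ℕ) : ℝ := (if a n then 2 else 0) / 3 ^ (n + 1)

lemma cdig_nonneg (a n) : 0 ≤ cdig a n := by unfold cdig; positivity

lemma cdig_le (a n) : cdig a n ≤ 2 / 3 ^ (n + 1) := by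
  unfold cdig
  gcongr
  split <;> norm_num

lemma geom3_eq (N : ℕ) : (fun n : ℕ => 2 / (3:ℝ) ^ (n + N + 1))
      = fun n : ℕ => (2 / 3 ^ (N + 1)) * (1/3) ^ n := by
  funext n
  rw [pow_add, pow_add]
  field_simp
  rw [one_div_pow]; field_simp; ring

lemma summable_geom3 (N : ℕ) : Summable (fun n : ℕ => 2 / (3:ℝ) ^ (n + N + 1)) := by
  rw [geom3_eq]
  exact (summable_geometric_of_lt_one (by norm_num) (by norm_num)).mul_left _

lemma tsum_geom3 (N : ℕ) : ∑' n : ℕ, 2 / (3:ℝ) ^ (n + N + 1) = 1 / 3 ^ N := by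
  rw [geom3_eq, tsum_mul_left, tsum_geometric_of_lt_one (by norm_num) (by norm_num)]
  rw [pow_add]
  field_simp
  ring

lemma summable_cdig (a : ℕ → Bool) : Summable (cdig a) := by
  refine Summable.of_nonneg_of_le (fun n => cdig_nonneg a n) (fun n => ?_)
    (by simpa using summable_geom3 0)
  simpa using cdig_le a n

lemma summable_cdig_shift (a : ℕ → Bool) (N : ℕ) : Summable (fun n => cdig a (n + N)) :=
  (summable_nat_add_iff N).2 (summable_cdig a)

lemma tsum_cdig_shift_nonneg (a N) : 0 ≤ ∑' n : ℕ, cdig a (n + N) :=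
  tsum_nonneg (fun n => cdig_nonneg a _)

lemma tsum_cdig_shift_le (a N) : ∑' n : ℕ, cdig a (n + N) ≤ 1 / 3 ^ N := by
  rw [← tsum_geom3 N]
  exact Summable.tsum_le_tsum (fun n => cdig_le a _) (summable_cdig_shift a N) (summable_geom3 N)

def cantorFun (a : ℕ → Bool) : ℝ := ∑' n, cdig a n

lemma cantorFun_split (a : ℕ → Bool) (N : ℕ) :
    cantorFun a = (∑ n ∈ Finset.range N, cdig a n) + ∑' n : ℕ, cdig a (n + N) :=
  (Summable.sum_add_tsum_nat_add N (summable_cdig a)).symm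

lemma cantorFun_injective : Function.Injective cantorFun := by
  intro a b hab
  by_contra hne
  have hex : ∃ n, a n ≠ b n := Function.ne_iff.1 hne
  classical
  set n := Nat.find hex with hn
  have hdiff : a n ≠ b n := Nat.find_spec hex
  have hagree : ∀ m < n, a m = b m := fun m hm => not_not.1 (Nat.find_min hex hm)
  have key : ∀ x y : ℕ → Bool, x n = true → y n = false → (∀ m < n, x m = y m) →
      cantorFun x ≠ cantorFun y := by
    intro x y hx hy hagr
    have hsum : ∑ m ∈ Finset.range n, cdig x m = ∑ m ∈ Finset.range n, cdig y m :=
      Finset.sum_congr rfl fun m hm => by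
        unfold cdig; rw [hagr m (Finset.mem_range.1 hm)]
    have hxge : (2:ℝ) / 3 ^ (n + 1) ≤ ∑' m : ℕ, cdig x (m + n) := by
      have := Summable.le_tsum (summable_cdig_shift x n) 0 (fun m _ => cdig_nonneg x _)
      simpa [cdig, hx] using this
    have hyle : ∑' m : ℕ, cdig y (m + n) ≤ 1 / 3 ^ (n + 1) := by
      have h1 := Summable.tsum_eq_zero_add (summable_cdig_shift y n)
      have h3 : cdig y (0 + n) = 0 := by simp [cdig, hy]
      have h2 : (∑' m : ℕ, cdig y (m + (n + 1))) ≤ 1 / 3 ^ (n+1) := tsum_cdig_shift_le y (n+1)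
      rw [h1, h3, zero_add]
      have h4 : ∀ m : ℕ, m + 1 + n = m + (n + 1) := fun m => by omega
      simp only [h4]
      exact h2
    have hlt : cantorFun y < cantorFun x := by
      rw [cantorFun_split x n, cantorFun_split y n, hsum]
      have h5 : (1:ℝ)/3^(n+1) < 2 / 3 ^ (n+1) := by gcongr <;> norm_num
      linarith
    exact hlt.ne'
  rcases Bool.eq_false_or_eq_true (a n) with ha | ha
  · have hb : b n = false := by
      cases hbn : b n
      · rfl
      · exact absurd (ha.trans hbn.symm) hdiff
    exact key a b ha hb hagree hab
  · have hb : b n = true := by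
      cases hbn : b n
      · exact absurd (ha.trans hbn.symm) hdiff
      · rfl
    exact key b a hb ha (fun m hm => (hagree m hm).symm) hab.symm

lemma cantorFun_nonneg (a : ℕ → Bool) : 0 ≤ cantorFun a :=
  tsum_nonneg (fun n => cdig_nonneg a n)

lemma cantorFun_le_one (a : ℕ → Bool) : cantorFun a ≤ 1 := by
  have := tsum_cdig_shift_le a 0
  simpa [cantorFun] using this

lemma cantorFun_mem_Icc (a : ℕ → Bool) : cantorFun a ∈ Icc (0:ℝ) 1 :=
  ⟨cantorFun_nonneg a, cantorFun_le_one a⟩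

/-- partial sum given finitely many digits -/
def psum (N : ℕ) (s : Fin N → Bool) : ℝ :=
  ∑ n : Fin N, (if s n then 2 else 0) / 3 ^ ((n : ℕ) + 1)

lemma range_cantorFun_subset (N : ℕ) :
    Set.range cantorFun ⊆ ⋃ s : Fin N → Bool, Icc (psum N s) (psum N s + 1 / 3 ^ N) := by
  rintro _ ⟨a, rfl⟩
  refine mem_iUnion.2 ⟨fun i => a i, ?_⟩
  have hps : psum N (fun i => a i) = ∑ n ∈ Finset.range N, cdig a n := by
    rw [psum, Finset.sum_range fun n => cdig a n]
    rfl
  constructor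
  · rw [cantorFun_split a N, hps]
    have := tsum_cdig_shift_nonneg a N
    linarith
  · rw [cantorFun_split a N, hps]
    have := tsum_cdig_shift_le a N
    linarith

lemma volume_range_cantorFun : volume (Set.range cantorFun) = 0 := by
  have key : ∀ N : ℕ, volume (Set.range cantorFun) ≤ (ENNReal.ofReal (2/3)) ^ N := by
    intro N
    calc volume (Set.range cantorFun)
        ≤ volume (⋃ s : Fin N → Bool, Icc (psum N s) (psum N s + 1 / 3 ^ N)) :=
          measure_mono (range_cantorFun_subset N)
      _ ≤ ∑ s : Fin N → Bool, volume (Icc (psum N s) (psum N s + 1 / 3 ^ N)) :=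
          measure_iUnion_fintype_le _ _
      _ = ∑ s : Fin N → Bool, ENNReal.ofReal (1 / 3 ^ N) := by
          refine Finset.sum_congr rfl fun s _ => ?_
          rw [Real.volume_Icc]
          congr 1
          ring
      _ = (2 ^ N : ℕ) * ENNReal.ofReal (1 / 3 ^ N) := by
          rw [Finset.sum_const, Finset.card_univ, Fintype.card_fun]
          simp [nsmul_eq_mul]
      _ ≤ (ENNReal.ofReal (2/3)) ^ N := by
          rw [← ENNReal.ofReal_pow (by norm_num : (0:ℝ) ≤ 2/3),
            ← ENNReal.ofReal_natCast, ← ENNReal.ofReal_mul (by positivity)]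
          apply ENNReal.ofReal_le_ofReal
          apply le_of_eq
          push_cast
          rw [div_pow]
          field_simp
  have htend : Filter.Tendsto (fun N : ℕ => (ENNReal.ofReal (2/3)) ^ N)
      Filter.atTop (nhds 0) :=
    ENNReal.tendsto_pow_atTop_nhds_zero_of_lt_one
      (by rw [ENNReal.ofReal_lt_one]; norm_num)
  have := ge_of_tendsto htend (Filter.Eventually.of_forall key)
  exact le_antisymm this zero_le



def lam : Cardinal := sInf {κ : Cardinal | 𝔠 < 2 ^ κ}

lemma lam_nonempty : {κ : Cardinal | 𝔠 < 2 ^ κ}.Nonempty := ⟨𝔠, cantor 𝔠⟩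

lemma lam_spec : 𝔠 < 2 ^ lam := csInf_mem lam_nonempty

lemma lam_le_continuum : lam ≤ 𝔠 := csInf_le' (cantor 𝔠)

lemma lam_min {μ : Cardinal} (h : μ < lam) : 2 ^ μ ≤ 𝔠 := by
  by_contra h'
  push_neg at h'
  exact h.not_ge (csInf_le' h')

lemma aleph0_le_lam : ℵ₀ ≤ lam := by
  by_contra h
  push_neg at h
  have h2 : (2:Cardinal) ^ lam < ℵ₀ := by
    have := power_lt_aleph0 (by exact nat_lt_aleph0 2) h
    simpa using this
  exact absurd ((h2.trans_le (aleph0_le_continuum)).trans lam_spec) (lt_irrefl _)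

abbrev II : Type := lam.ord.ToType

lemma mk_Iic_lt (i : II) : #(Iic i) < lam := by
  have h1 : #(Iio i) < lam := Cardinal.mk_Iio_ord_toType i
  have h2 : (Iic i) = insert i (Iio i) := by
    ext j; simp [le_iff_lt_or_eq, or_comm]
  rw [h2]
  calc #(insert i (Iio i) : Set II) ≤ #(Iio i) + 1 := mk_insert_le
    _ < lam := add_lt_of_lt aleph0_le_lam h1 (one_lt_aleph0.trans_le aleph0_le_lam)

def Eset : Set (II → Bool) := {z | ∃ i, ∀ j, z j = true → j ≤ i}

lemma mk_Eset_le : #Eset ≤ 𝔠 := by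
  have hE : Eset = ⋃ i : II, {z : II → Bool | ∀ j, z j = true → j ≤ i} := by
    ext z; simp [Eset]
  rw [hE]
  apply (mk_iUnion_le _).trans
  have h1 : #II ≤ 𝔠 := by
    rw [Cardinal.mk_toType, card_ord]
    exact lam_le_continuum
  have h2 : ⨆ i : II, #{z : II → Bool | ∀ j, z j = true → j ≤ i} ≤ 𝔠 := by
    apply ciSup_le'
    intro i
    have hinj : Function.Injective
        (fun (z : {z : II → Bool | ∀ j, z j = true → j ≤ i}) (j : Iic i) => z.1 j.1) := by
      intro z w h
      ext j
      by_cases hj : j ≤ i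
      · exact congrFun h ⟨j, hj⟩
      · have hz : z.1 j = false := by
          cases hzz : z.1 j
          · rfl
          · exact absurd (z.2 j hzz) hj
        have hw : w.1 j = false := by
          cases hww : w.1 j
          · rfl
          · exact absurd (w.2 j hww) hj
        rw [hz, hw]
    apply (mk_le_of_injective hinj).trans
    have : #(↥(Iic i) → Bool) = 2 ^ #(Iic i) := by
      rw [← mk_bool, ← power_def]
    rw [this]
    exact lam_min (mk_Iic_lt i)
  calc #II * ⨆ i : II, #{z : II → Bool | ∀ j, z j = true → j ≤ i} ≤ 𝔠 * 𝔠 :=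
        mul_le_mul' h1 h2
    _ = 𝔠 := by rw [continuum_mul_self]

def Dsub (x : II → Bool) : Set Eset := {z | toLex z.1 ≤ toLex x}

lemma Dsub_strict {x y : II → Bool} (h : toLex x < toLex y) : Dsub x ⊂ Dsub y := by
  obtain ⟨i, hag, hlt⟩ := id h
  have hxiyi : x i = false ∧ y i = true := Bool.lt_iff.1 hlt
  set z : II → Bool := fun j => if j ≤ i then y j else false with hz
  have hzE : z ∈ Eset := ⟨i, fun j hj => by by_contra hc; simp [hz, hc] at hj⟩
  have hzy : toLex z ≤ toLex y := by
    rcases eq_or_ne z y with he | hne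
    · exact he ▸ le_rfl
    · apply le_of_lt
      obtain ⟨j₀, hj₀mem, hj₀min⟩ :=
        (IsWellFounded.wf : WellFounded ((· < ·) : II → II → Prop)).has_min
          {j | z j ≠ y j} (Function.ne_iff.1 hne)
      refine ⟨j₀, fun k hk => not_not.1 fun hc => hj₀min k hc hk, ?_⟩
      have hj₀i : ¬ j₀ ≤ i := fun hle => hj₀mem (by simp [hz, hle])
      have hzj : z j₀ = false := by simp [hz, hj₀i]
      have hyj : y j₀ = true := by
        cases hy : y j₀
        · exact absurd (hzj.trans hy.symm) hj₀mem
        · rfl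
      show z j₀ < y j₀
      rw [hzj, hyj]
      exact Bool.lt_iff.2 ⟨rfl, rfl⟩
  have hxz : toLex x < toLex z := by
    refine ⟨i, fun j hj => (hag j hj).trans (by simp [hz, hj.le]), ?_⟩
    show x i < z i
    simp only [hz]
    rw [if_pos le_rfl, hxiyi.1, hxiyi.2]
    exact Bool.lt_iff.2 ⟨rfl, rfl⟩
  constructor
  · intro w hw
    exact le_trans hw (le_of_lt h)
  · intro hcon
    have hmem : (⟨z, hzE⟩ : Eset) ∈ Dsub x := hcon (show (⟨z, hzE⟩ : Eset) ∈ Dsub y from hzy)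
    exact (not_le.2 hxz) hmem


end Aux

open Cardinal in
/-- There is no strictly monotone Borel hull operation on `N`: no map assigning to each
null `A ⊆ [0,1]` a Borel hull `φ(A) ⊆ [0,1]` such that `A ⊊ A'` implies `φ(A) ⊊ φ(A')`.
Here `volume` applied to an arbitrary set is the Lebesgue outer measure. -/
theorem no_strictly_monotone_borel_hull_on_null :
    ¬ ∃ φ : Set ℝ → Set ℝ,
      (∀ A ∈ NullSets, MeasurableSet (φ A) ∧ φ A ⊆ Icc (0:ℝ) 1 ∧ A ⊆ φ A ∧
        volume (φ A) = volume A) ∧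
      (∀ A ∈ NullSets, ∀ A' ∈ NullSets, A ⊂ A' → φ A ⊂ φ A') := by
  rintro ⟨φ, h1, h2⟩
  have hSnull : volume (Set.range cantorFun) = 0 := volume_range_cantorFun
  have hSIcc : Set.range cantorFun ⊆ Icc (0:ℝ) 1 := by
    rintro _ ⟨a, rfl⟩; exact cantorFun_mem_Icc a
  have hcard : #Eset ≤ #(Set.range cantorFun) := by
    rw [mk_range_eq _ cantorFun_injective]
    refine mk_Eset_le.trans (le_of_eq ?_)
    rw [← power_def, mk_bool, mk_nat, two_power_aleph0]
  obtain ⟨emb⟩ := (Cardinal.le_def _ _).1 hcard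
  set ψ : Eset → ℝ := fun z => (emb z : ℝ) with hψ
  have hψinj : Function.Injective ψ := fun a b hab => emb.injective (Subtype.val_injective hab)
  set A : (II → Bool) → Set ℝ := fun x => ψ '' (Dsub x) with hA
  have hAnull : ∀ x, A x ∈ NullSets := by
    intro x
    constructor
    · rintro r ⟨z, _, rfl⟩; exact hSIcc (emb z).2
    · refine measure_mono_null ?_ hSnull
      rintro r ⟨z, _, rfl⟩; exact (emb z).2
  have hAstrict : ∀ x y : II → Bool, toLex x < toLex y → A x ⊂ A y := by
    intro x y hxy
    have hD := Dsub_strict hxy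
    refine Set.ssubset_iff_subset_ne.2 ⟨Set.image_mono hD.subset, fun hcon => ?_⟩
    exact hD.ne (Function.Injective.image_injective hψinj hcon)
  have hinj : Function.Injective (fun x : Lex (II → Bool) => φ (A (ofLex x))) := by
    intro x y hxy
    by_contra hne
    rcases lt_or_gt_of_ne hne with hlt | hlt
    · exact (Set.ssubset_iff_subset_ne.1
        (h2 _ (hAnull (ofLex x)) _ (hAnull (ofLex y)) (hAstrict _ _ hlt))).2 hxy
    · exact (Set.ssubset_iff_subset_ne.1
        (h2 _ (hAnull (ofLex y)) _ (hAnull (ofLex x)) (hAstrict _ _ hlt))).2 hxy.symm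
  have hle : #(Lex (II → Bool)) ≤ #{t : Set ℝ | MeasurableSet t} :=
    mk_le_of_injective (f := fun x : Lex (II → Bool) =>
      (⟨φ (A (ofLex x)), (h1 _ (hAnull (ofLex x))).1⟩ : {t : Set ℝ // MeasurableSet t}))
      (fun x y hxy => hinj (congrArg Subtype.val hxy))
  have hgt : 𝔠 < #(Lex (II → Bool)) := by
    have heq : #(Lex (II → Bool)) = 2 ^ lam := by
      rw [Cardinal.mk_congr (toLex : (II → Bool) ≃ Lex (II → Bool)).symm,
        ← power_def, mk_bool, Cardinal.mk_toType, card_ord]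
    rw [heq]
    exact lam_spec
  exact absurd (hle.trans borel_card) hgt.not_ge
end
end

section
/- For every infinite set X there exists a family C of subsets of X which is a chain with respect to inclusion (for all C, C' ∈ C, either C ⊆ C' or C' ⊆ C) and whose cardinality is strictly greater than the cardinality of X. -/
open Set Cardinal

universe u

section aux
variable {X : Type u} [Infinite X]

noncomputable def muc (X : Type u) [Infinite X] : Cardinal.{u} :=
  sInf {c : Cardinal.{u} | #X < 2 ^ c}

lemma muc_mem : #X < 2 ^ muc X := by
  have : #X ∈ {c : Cardinal.{u} | #X < 2 ^ c} := by
    simpa using Cardinal.cantor #X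
  exact csInf_mem ⟨_, this⟩

lemma muc_min {c : Cardinal.{u}} (h : c < muc X) : 2 ^ c ≤ #X := by
  by_contra h'
  exact absurd (csInf_le' (show c ∈ {c | #X < 2 ^ c} from lt_of_not_ge h')) h.not_ge

lemma muc_le : muc X ≤ #X := csInf_le' (by simpa using Cardinal.cantor #X)

lemma aleph0_le_muc : ℵ₀ ≤ muc X := by
  by_contra h
  push_neg at h
  have h2 : (2 : Cardinal) ^ muc X < ℵ₀ :=
    Cardinal.power_lt_aleph0 (by exact_mod_cast Cardinal.nat_lt_aleph0 2) h
  exact absurd (lt_trans (muc_mem (X := X)) h2) (Cardinal.aleph0_le_mk X).not_gt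

end aux

/-- In every infinite set `X` there is a chain of subsets (w.r.t. inclusion) of
cardinality strictly greater than that of `X`. -/
theorem exists_big_chain_of_subsets (X : Type*) [Infinite X] :
    ∃ C : Set (Set X), IsChain (· ⊆ ·) C ∧ Cardinal.mk X < Cardinal.mk C := by
  classical
  set μ := muc X with hμ
  set M := μ.ord.ToType with hM
  set Lb : M → Set (M → Bool) := fun b => {f | ∀ i, b < i → f i = false} with hLb
  set L : Set (M → Bool) := ⋃ b, Lb b with hL
  -- each piece is small
  have hpiece : ∀ b : M, #(Lb b) ≤ #X := by
    intro b
    have hinj : Function.Injective fun f : Lb b => fun i : Iic b => f.1 i := by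
      rintro ⟨f, hf⟩ ⟨g, hg⟩ h
      ext i
      rcases le_or_gt i b with hi | hi
      · exact congrFun h ⟨i, hi⟩
      · exact (hf i hi).trans (hg i hi).symm
    have hIic : #(Iic b) < μ := by
      have h1 : (Iic b : Set M) ⊆ insert b (Iio b) := by
        intro x hx
        rcases eq_or_lt_of_le (mem_Iic.1 hx) with h | h
        · exact Or.inl h
        · exact Or.inr h
      have h2 : #(Iic b) ≤ #(Iio b) + 1 :=
        (Cardinal.mk_le_mk_of_subset h1).trans Cardinal.mk_insert_le
      have h3 : #(Iio b) < μ := Cardinal.mk_Iio_ord_toType b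
      calc #(Iic b) ≤ #(Iio b) + 1 := h2
        _ < μ := by
            rcases lt_or_ge (#(Iio b)) ℵ₀ with h | h
            · exact lt_of_lt_of_le (Cardinal.add_lt_aleph0 h Cardinal.one_lt_aleph0)
                aleph0_le_muc
            · rwa [Cardinal.add_one_of_aleph0_le h]
    calc #(Lb b) ≤ #(Iic b → Bool) := Cardinal.mk_le_of_injective hinj
      _ = 2 ^ #(Iic b) := by
          simp [Cardinal.mk_arrow]
      _ ≤ #X := muc_min hIic
  -- #L ≤ #X
  have hcard : #L ≤ #X := by
    calc #L ≤ #M * ⨆ b, #(Lb b) := Cardinal.mk_iUnion_le _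
      _ ≤ #X * #X := by
          refine mul_le_mul' ?_ (ciSup_le' hpiece)
          rw [hM, Cardinal.mk_ord_toType]
          exact muc_le
      _ = #X := Cardinal.mul_mk_eq_max.trans (max_self _)
  obtain ⟨ι⟩ : Nonempty (L ↪ X) := Cardinal.le_def _ _ |>.1 hcard
  set F : Lex (M → Bool) → Set X :=
    fun g => ι '' {f : L | toLex f.1 ≤ g} with hF
  have hmono : ∀ {g g' : Lex (M → Bool)}, g ≤ g' → F g ⊆ F g' := by
    intro g g' h
    exact Set.image_mono fun f hf => le_trans hf h
  have hstrict : ∀ {g g' : Lex (M → Bool)}, g < g' →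
      ∃ f : L, toLex f.1 ≤ g' ∧ ¬ toLex f.1 ≤ g := by
    intro g g' h
    obtain ⟨i, hagree, hlt⟩ := h
    obtain ⟨hgi, hgi'⟩ := Bool.lt_iff.1 hlt
    set f0 : M → Bool := fun j => if j ≤ i then ofLex g' j else false with hf0
    have hfL : f0 ∈ L := mem_iUnion.2 ⟨i, fun j hj => by simp [hf0, not_le.2 hj]⟩
    refine ⟨⟨f0, hfL⟩, ?_, ?_⟩
    · rcases eq_or_ne f0 (ofLex g') with he | hne
      · exact le_of_eq (congrArg toLex he)
      · refine le_of_lt ?_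
        have hne' : ∃ j, f0 j ≠ ofLex g' j := Function.ne_iff.1 hne
        have hwf : WellFounded ((· < ·) : M → M → Prop) := wellFounded_lt
        set k := hwf.min _ hne' with hk
        have hkmem : f0 k ≠ ofLex g' k := hwf.min_mem _ hne'
        have hknle : ¬ k ≤ i := fun hki => hkmem (by simp [hf0, hki])
        refine ⟨k, fun j hj => ?_, ?_⟩
        · by_contra hj'
          exact hwf.not_lt_min _ hj' hj
        · have h1 : f0 k = false := by simp [hf0, hknle]
          have h2 : ofLex g' k = true := by
            cases h' : ofLex g' k
            · exact absurd (h1.trans h'.symm) hkmem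
            · rfl
          show f0 k < ofLex g' k
          rw [h1, h2]
          exact Bool.false_lt_true
    · refine not_le.2 ?_
      refine ⟨i, fun j hj => ?_, ?_⟩
      · show ofLex g j = f0 j
        simp [hf0, le_of_lt hj, hagree j hj]
      · show ofLex g i < f0 i
        simp [hf0, hgi, hgi', Bool.false_lt_true]
  have hFinj : Function.Injective F := by
    intro g g' h
    by_contra hne
    rcases lt_or_gt_of_ne hne with hlt | hlt
    · obtain ⟨f, hf1, hf2⟩ := hstrict hlt
      have hm : ι f ∈ F g' := ⟨f, hf1, rfl⟩
      rw [← h] at hm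
      obtain ⟨f', hf', hff⟩ := hm
      exact hf2 (by rwa [ι.injective hff] at hf')
    · obtain ⟨f, hf1, hf2⟩ := hstrict hlt
      have hm : ι f ∈ F g := ⟨f, hf1, rfl⟩
      rw [h] at hm
      obtain ⟨f', hf', hff⟩ := hm
      exact hf2 (by rwa [ι.injective hff] at hf')
  refine ⟨Set.range F, ?_, ?_⟩
  · rintro _ ⟨g, rfl⟩ _ ⟨g', rfl⟩ _
    rcases le_total g g' with h | h
    · exact Or.inl (hmono h)
    · exact Or.inr (hmono h)
  · rw [Cardinal.mk_range_eq _ hFinj]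
    have heq : #(Lex (M → Bool)) = 2 ^ μ := by
      rw [Cardinal.mk_congr (toLex (α := M → Bool)).symm]
      simp [Cardinal.mk_arrow, hM, Cardinal.mk_ord_toType]
    rw [heq]
    exact muc_mem
end
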